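/- Let σ be a Frobenius splitting of a commutative ring R of prime characteristic p. Then every ideal of R compatibly split under σ is a radical ideal; moreover, if the ideals I and J are compatibly split under σ, then both the sum I + J and the intersection I ∩ J are compatibly split under σ. -/

import Mathlib

/-- Let `σ` be a Frobenius splitting of a commutative ring `R` of prime characteristic `p`.
Then every ideal of `R` compatibly split under `σ` is a radical ideal; moreover, if the
ideals `I` and `J` are compatibly split under `σ`, then both `I + J` and `I ⊓ J` are
compatibly split under `σ`. -/
theorem compatibly_split_radical_sum_inter
    {R : Type*} [CommRing R] (p : ℕ) (hp : p.Prime) [CharP R p]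
    (σ : R → R)
    (hadd : ∀ a b : R, σ (a + b) = σ a + σ b)
    (hsemilin : ∀ a b : R, σ (a ^ p * b) = a * σ b)
    (hone : σ 1 = 1) :
    (∀ I : Ideal R, (∀ a ∈ I, σ a ∈ I) → I.radical = I) ∧
    (∀ I J : Ideal R, (∀ a ∈ I, σ a ∈ I) → (∀ a ∈ J, σ a ∈ J) →
      (∀ a ∈ I + J, σ a ∈ I + J) ∧ (∀ a ∈ I ⊓ J, σ a ∈ I ⊓ J)) := by
  have hpow : ∀ a : R, σ (a ^ p) = a := by
    intro a
    have := hsemilin a 1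
    simpa [hone] using this
  constructor
  · intro I hI
    refine le_antisymm ?_ Ideal.le_radical
    intro a ha
    obtain ⟨n, hn⟩ := ha
    rcases Nat.eq_zero_or_pos n with h0 | hpos
    · subst h0
      simp only [pow_zero] at hn
      simpa using I.mul_mem_left a hn
    · -- find k with n ≤ p ^ k
      obtain ⟨k, hk⟩ : ∃ k, n ≤ p ^ k := ⟨n, Nat.le_of_lt (Nat.lt_pow_self hp.one_lt : n < p ^ n)⟩
      have hpk : a ^ (p ^ k) ∈ I := by
        have : a ^ (p ^ k) = a ^ n * a ^ (p ^ k - n) := by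
          rw [← pow_add, Nat.add_sub_cancel' hk]
        rw [this]
        exact I.mul_mem_right _ hn
      clear hk hn
      induction k with
      | zero => simpa using hpk
      | succ k ih =>
        apply ih
        have : a ^ p ^ (k + 1) = (a ^ p ^ k) ^ p := by
          rw [← pow_mul, pow_succ, mul_comm]
        rw [this] at hpk
        have := hI _ hpk
        rwa [hpow] at this
  · intro I J hI hJ
    constructor
    · intro a ha
      rw [Submodule.add_eq_sup, Submodule.mem_sup] at ha ⊢
      obtain ⟨i, hi, j, hj, rfl⟩ := ha
      exact ⟨σ i, hI i hi, σ j, hJ j hj, (hadd i j).symm⟩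
    · intro a ha
      exact ⟨hI a ha.1, hJ a ha.2⟩
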